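/- If all tasks have pairwise distinct values, the greedy mechanism M_AP is group strategyproof: no coalition of agents can jointly hide edges so that every coalition member receives utility at least as large as under truthful reporting and at least one member receives strictly larger utility. -/

import Mathlib

open Classical

/-- An edge of the bipartite graph: a pair (agent, task). -/
abbrev Edge (n m : ℕ) := Fin n × Fin m

variable {n m : ℕ}

/-- Number of tasks assigned to agent `i` in the edge set `μ`. -/
def deg (μ : Finset (Edge n m)) (i : Fin n) : ℕ := (μ.filter (fun e => e.1 = i)).card

/-- `μ` is a b-matching over the edge set `E'`: it uses only edges of `E'`, each agent `i`
receives at most `b i` tasks, and each task is matched to at most one agent. -/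
def IsBMatching (b : Fin n → ℕ) (E' μ : Finset (Edge n m)) : Prop :=
  μ ⊆ E' ∧ (∀ i, deg μ i ≤ b i) ∧ ∀ j : Fin m, (μ.filter (fun e => e.2 = j)).card ≤ 1

/-- Weight of a matching: total value of matched tasks. -/
noncomputable def weight (q : Fin m → ℝ) (μ : Finset (Edge n m)) : ℝ := ∑ e ∈ μ, q e.2

/-- Utility of agent `i`: total value of the tasks matched to `i`. -/
noncomputable def util (q : Fin m → ℝ) (i : Fin n) (μ : Finset (Edge n m)) : ℝ :=
  ∑ e ∈ μ.filter (fun e => e.1 = i), q e.2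

/-- `μ` is a maximum vertex-weighted b-matching over the edge set `E'`. -/
def IsMaxMatching (b : Fin n → ℕ) (q : Fin m → ℝ) (E' μ : Finset (Edge n m)) : Prop :=
  IsBMatching b E' μ ∧ ∀ ν, IsBMatching b E' ν → weight q ν ≤ weight q μ

/-- The edges of `E` incident to agent `i`. -/
def agentEdges (E : Finset (Edge n m)) (i : Fin n) : Finset (Edge n m) :=
  E.filter (fun e => e.1 = i)

/-- The edge set obtained from `E` when agent `i` reports `S` instead of its true edges. -/
def deviate (E : Finset (Edge n m)) (i : Fin n) (S : Finset (Edge n m)) : Finset (Edge n m) :=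
  E.filter (fun e => e.1 ≠ i) ∪ S

/-- A valid report of agent `i`: a nonempty subset of its true incident edges. -/
def ValidReport (E : Finset (Edge n m)) (i : Fin n) (S : Finset (Edge n m)) : Prop :=
  S ⊆ agentEdges E i ∧ S.Nonempty
open Classical in
/-- The tasks sorted in non-increasing order of value (ties broken by index). -/
noncomputable def sortedTasks (m : ℕ) (q : Fin m → ℝ) : List (Fin m) :=
  List.insertionSort (fun j k => q k ≤ q j) (List.finRange m)

/-- The greedy mechanism `M_AP`: process tasks in non-increasing value order, assigning each
task to the highest-priority unsaturated agent connected to it, if any. -/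
noncomputable def MAP (b : Fin n → ℕ) (q : Fin m → ℝ) (E' : Finset (Edge n m)) :
    Finset (Edge n m) :=
  (sortedTasks m q).foldl (fun μ j =>
    match (List.finRange n).find? (fun i => decide ((i, j) ∈ E' ∧ deg μ i < b i)) with
    | some i => insert (i, j) μ
    | none => μ) ∅

/-- `p = [(i₁,j₁),…,(i_L,j_L)]` is an augmenting path from task `j = j₁` with respect to the
matching `μ` in the graph `E'`: the edges `(i_ℓ, j_ℓ)` are non-matching edges of `E'`, the
edges `(i_ℓ, j_{ℓ+1})` are matching edges, all interior agents are saturated and the final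
agent is unsaturated. -/
structure IsAugPathFrom (b : Fin n → ℕ) (E' μ : Finset (Edge n m)) (j : Fin m)
    (p : List (Edge n m)) : Prop where
  ne : p ≠ []
  starts : ∀ e ∈ p.head?, e.2 = j
  mem : ∀ e ∈ p, e ∈ E' ∧ e ∉ μ
  matched : ∀ k, (h : k + 1 < p.length) →
    ((p.get ⟨k, Nat.lt_of_succ_lt h⟩).1, (p.get ⟨k + 1, h⟩).2) ∈ μ
  satInterior : ∀ k, (h : k + 1 < p.length) →
    b (p.get ⟨k, Nat.lt_of_succ_lt h⟩).1 ≤ deg μ (p.get ⟨k, Nat.lt_of_succ_lt h⟩).1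
  unsatLast : ∀ e ∈ p.getLast?, deg μ e.1 < b e.1
  agentsNodup : (p.map Prod.fst).Nodup
  tasksNodup : (p.map Prod.snd).Nodup

/-- The matching edges of an augmenting path. -/
def pathMatched (p : List (Edge n m)) : List (Edge n m) :=
  (p.zip p.tail).map (fun ef => (ef.1.1, ef.2.2))

/-- Flip an augmenting path: remove its matching edges and add its non-matching edges. -/
def applyPath (μ : Finset (Edge n m)) (p : List (Edge n m)) : Finset (Edge n m) :=
  (μ \ (pathMatched p).toFinset) ∪ p.toFinset

/-- A numeric key realizing the lexicographic order (by vertex indices) on augmenting paths. -/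
def pathKey (n m : ℕ) (p : List (Edge n m)) : ℕ :=
  ((p.flatMap fun (e : Edge n m) => [e.1.val + 1, e.2.val + 1]) ++
    List.replicate (2 * n - 2 * p.length) 0).foldl (fun a d => a * (n + m + 2) + d) 0

/-- DFS explores agents in priority order and goes deep first: it returns the lexicographically
least augmenting path. -/
def dfsCost (n m : ℕ) (p : List (Edge n m)) : ℕ := pathKey n m p

/-- BFS returns a shortest augmenting path, exploring vertices in priority order: it returns
the lexicographically least augmenting path among those of minimum length. -/
def bfsCost (n m : ℕ) (p : List (Edge n m)) : ℕ :=
  p.length * (n + m + 2) ^ (2 * n + 2) + pathKey n m p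

/-- Select the cost-minimal augmenting path from task `j`, if an augmenting path exists. -/
noncomputable def selectPath (cost : List (Edge n m) → ℕ) (b : Fin n → ℕ)
    (E' μ : Finset (Edge n m)) (j : Fin m) : Option (List (Edge n m)) :=
  if h : ∃ p, IsAugPathFrom b E' μ j p ∧ ∀ p', IsAugPathFrom b E' μ j p' → cost p ≤ cost p'
  then some h.choose else none

/-- The augmenting-path algorithm: process tasks in non-increasing value order, at each step
flipping the augmenting path found by the (deterministic) search given by `cost`. -/
noncomputable def runAug (cost : List (Edge n m) → ℕ) (b : Fin n → ℕ) (q : Fin m → ℝ)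
    (E' : Finset (Edge n m)) : Finset (Edge n m) :=
  (sortedTasks m q).foldl (fun μ j =>
    match selectPath cost b E' μ j with
    | some p => applyPath μ p
    | none => μ) ∅

/-- The maximum vertex-weighted b-matching mechanism using breadth-first search. -/
noncomputable def MBFS (b : Fin n → ℕ) (q : Fin m → ℝ) (E' : Finset (Edge n m)) :
    Finset (Edge n m) := runAug (bfsCost n m) b q E'

/-- The maximum vertex-weighted b-matching mechanism using depth-first search. -/
noncomputable def MDFS (b : Fin n → ℕ) (q : Fin m → ℝ) (E' : Finset (Edge n m)) :
    Finset (Edge n m) := runAug (dfsCost n m) b q E'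

-- === helpers ===
namespace MAPGSP

noncomputable def pick (b : Fin n → ℕ) (G : Finset (Edge n m)) (μ : Finset (Edge n m))
    (j : Fin m) : Option (Fin n) :=
  (List.finRange n).find? (fun i => decide ((i, j) ∈ G ∧ deg μ i < b i))

noncomputable def stepF (b : Fin n → ℕ) (G : Finset (Edge n m)) :
    Finset (Edge n m) → Fin m → Finset (Edge n m) := fun μ j =>
  match pick b G μ j with
  | some i => insert (i, j) μ
  | none => μ

noncomputable def runS (b : Fin n → ℕ) (G : Finset (Edge n m)) (L : List (Fin m)) (k : ℕ) :
    Finset (Edge n m) := (L.take k).foldl (stepF b G) ∅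

lemma MAP_eq_runS (b : Fin n → ℕ) (q : Fin m → ℝ) (G : Finset (Edge n m)) :
    MAP b q G = runS b G (sortedTasks m q) (sortedTasks m q).length := by
  rw [runS, List.take_length]; rfl

lemma pick_spec {b : Fin n → ℕ} {G μ : Finset (Edge n m)} {j : Fin m} {i : Fin n}
    (h : pick b G μ j = some i) : (i, j) ∈ G ∧ deg μ i < b i := by
  unfold pick at h
  have h2 := List.find?_some h
  simp only [decide_eq_true_eq] at h2
  exact h2

private lemma find?_min_aux {N : ℕ} {P : Fin N → Bool} :
    ∀ {l : List (Fin N)}, l.Pairwise (· < ·) → ∀ {a : Fin N}, l.find? P = some a →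
      ∀ {i : Fin N}, i ∈ l → P i = true → a ≤ i := by
  intro l
  induction l with
  | nil => intro _ a h; simp at h
  | cons x xs ih =>
    intro hpw a hf i hi hPi
    rcases List.pairwise_cons.mp hpw with ⟨hx, hxs⟩
    rcases hPx : P x with _ | _
    · rw [List.find?_cons_of_neg (show ¬ P x = true by simp [hPx])] at hf
      rcases List.mem_cons.mp hi with rfl | hi'
      · rw [hPi] at hPx; exact absurd hPx (by simp)
      · exact ih hxs hf hi' hPi
    · rw [List.find?_cons_of_pos (show P x = true from hPx)] at hf
      obtain rfl : x = a := by simpa using hf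
      rcases List.mem_cons.mp hi with rfl | hi'
      · exact le_refl _
      · exact le_of_lt (hx i hi')

lemma pick_min {b : Fin n → ℕ} {G μ : Finset (Edge n m)} {j : Fin m} {i i' : Fin n}
    (h : pick b G μ j = some i) (h1 : (i', j) ∈ G) (h2 : deg μ i' < b i') : i ≤ i' :=
  find?_min_aux (List.pairwise_lt_finRange n) h (List.mem_finRange i')
    (decide_eq_true ⟨h1, h2⟩)

lemma pick_ex {b : Fin n → ℕ} {G μ : Finset (Edge n m)} {j : Fin m} {i' : Fin n}
    (h1 : (i', j) ∈ G) (h2 : deg μ i' < b i') :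
    ∃ i, pick b G μ j = some i ∧ i ≤ i' := by
  rcases hp : pick b G μ j with _ | i
  · exact absurd (decide_eq_true (⟨h1, h2⟩ : (i', j) ∈ G ∧ deg μ i' < b i'))
      (by simpa using List.find?_eq_none.mp hp i' (List.mem_finRange i'))
  · exact ⟨i, rfl, pick_min hp h1 h2⟩

lemma deg_insert {μ : Finset (Edge n m)} {i : Fin n} {j : Fin m} (hnm : (i, j) ∉ μ)
    (i₀ : Fin n) :
    deg (insert (i, j) μ) i₀ = deg μ i₀ + (if i₀ = i then 1 else 0) := by
  unfold deg
  rw [Finset.filter_insert]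
  by_cases h : i₀ = i
  · subst h
    rw [if_pos rfl, if_pos rfl,
      Finset.card_insert_of_notMem (fun hc => hnm (Finset.mem_filter.mp hc).1)]
  · rw [if_neg (fun hh : (i, j).1 = i₀ => h hh.symm), if_neg h, add_zero]

lemma util_insert {q : Fin m → ℝ} {μ : Finset (Edge n m)} {i : Fin n} {j : Fin m}
    (hnm : (i, j) ∉ μ) (i₀ : Fin n) :
    util q i₀ (insert (i, j) μ) = util q i₀ μ + (if i₀ = i then q j else 0) := by
  unfold util
  rw [Finset.filter_insert]
  by_cases h : i₀ = i
  · subst h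
    rw [if_pos rfl, if_pos rfl,
      Finset.sum_insert (fun hc => hnm (Finset.mem_filter.mp hc).1), add_comm]
  · rw [if_neg (fun hh : (i, j).1 = i₀ => h hh.symm), if_neg h, add_zero]

lemma runS_succ {b : Fin n → ℕ} {G : Finset (Edge n m)} {L : List (Fin m)} {k : ℕ}
    (hk : k < L.length) :
    runS b G L (k + 1) = stepF b G (runS b G L k) (L.get ⟨k, hk⟩) := by
  unfold runS
  rw [List.take_succ, List.getElem?_eq_getElem hk, Option.toList_some, List.foldl_append,
    List.foldl_cons, List.foldl_nil, List.get_eq_getElem]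

lemma runS_stable {b : Fin n → ℕ} {G : Finset (Edge n m)} {L : List (Fin m)} {k : ℕ}
    (hk : L.length ≤ k) : runS b G L k = runS b G L L.length := by
  unfold runS
  rw [List.take_of_length_le hk, List.take_length]

lemma runS_tasks {b : Fin n → ℕ} {G : Finset (Edge n m)} {L : List (Fin m)} (k : ℕ) :
    ∀ e ∈ runS b G L k, e.2 ∈ L.take k := by
  induction k with
  | zero => simp [runS]
  | succ k ih =>
    by_cases hk : k < L.length
    · rw [runS_succ hk]
      have htk : L.take (k+1) = L.take k ++ [L.get ⟨k, hk⟩] := by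
        rw [List.take_succ, List.getElem?_eq_getElem hk, Option.toList_some,
          List.get_eq_getElem]
      intro e he
      rw [htk]
      unfold stepF at he
      rcases hp : pick b G (runS b G L k) (L.get ⟨k, hk⟩) with _ | i <;> rw [hp] at he
      · exact List.mem_append_left _ (ih e he)
      · rcases Finset.mem_insert.mp he with rfl | he'
        · exact List.mem_append_right _ (by simp)
        · exact List.mem_append_left _ (ih e he')
    · push_neg at hk
      rw [runS_stable (by omega), ← runS_stable (le_of_lt (Nat.lt_succ_of_le hk))] at *
      rw [List.take_of_length_le (by omega)]
      intro e he
      have := ih e he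
      rw [List.take_of_length_le hk] at this
      exact this

lemma runS_notmem {b : Fin n → ℕ} {G : Finset (Edge n m)} {L : List (Fin m)}
    (hnd : L.Nodup) {k : ℕ} (hk : k < L.length) (i : Fin n) :
    (i, L.get ⟨k, hk⟩) ∉ runS b G L k := by
  intro hmem
  have h2 := runS_tasks k _ hmem
  obtain ⟨a, ha, hEq⟩ := List.mem_iff_getElem.mp h2
  have halt : a < k := by
    have := ha; rw [List.length_take] at this; omega
  have ha' : a < L.length := by omega
  rw [List.getElem_take] at hEq
  have : (⟨a, ha'⟩ : Fin L.length) = ⟨k, hk⟩ :=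
    hnd.get_inj_iff.mp (by simpa [List.get_eq_getElem] using hEq)
  have := congrArg Fin.val this
  simp at this; omega

lemma runS_step_some {b : Fin n → ℕ} {G : Finset (Edge n m)} {L : List (Fin m)}
    (q : Fin m → ℝ) (hnd : L.Nodup) {k : ℕ} (hk : k < L.length) {i : Fin n}
    (hp : pick b G (runS b G L k) (L.get ⟨k, hk⟩) = some i) (i₀ : Fin n) :
    deg (runS b G L (k+1)) i₀ = deg (runS b G L k) i₀ + (if i₀ = i then 1 else 0) ∧
    util q i₀ (runS b G L (k+1)) =
      util q i₀ (runS b G L k) + (if i₀ = i then q (L.get ⟨k, hk⟩) else 0) := by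
  have hins : (i, L.get ⟨k, hk⟩) ∉ runS b G L k := runS_notmem hnd hk i
  rw [runS_succ hk]
  unfold stepF
  rw [hp]
  exact ⟨deg_insert hins i₀, util_insert hins i₀⟩

lemma runS_step_none {b : Fin n → ℕ} {G : Finset (Edge n m)} {L : List (Fin m)} {k : ℕ}
    (hk : k < L.length)
    (hp : pick b G (runS b G L k) (L.get ⟨k, hk⟩) = none) :
    runS b G L (k+1) = runS b G L k := by
  rw [runS_succ hk]; unfold stepF; rw [hp]

end MAPGSP

open MAPGSP

/-- If all tasks have pairwise distinct values, `M_AP` is group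
strategyproof: no coalition `C` of agents can jointly hide edges (agents outside `C`
reporting truthfully) so that every coalition member's utility weakly increases and some
member's utility strictly increases. -/
theorem MAP_group_strategyproof (n m : ℕ) (b : Fin n → ℕ) (q : Fin m → ℝ)
    (hq : ∀ j, 0 < q j) (hdist : Function.Injective q) (E : Finset (Edge n m)) :
    ¬ ∃ (C : Finset (Fin n)) (D : Fin n → Finset (Edge n m)),
        (∀ i, ValidReport E i (D i)) ∧
        (∀ i ∉ C, D i = agentEdges E i) ∧
        (∀ i ∈ C,
          util q i (MAP b q E) ≤ util q i (MAP b q (Finset.univ.biUnion D))) ∧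
        (∃ i ∈ C,
          util q i (MAP b q E) < util q i (MAP b q (Finset.univ.biUnion D))) := by
  rintro ⟨C, D, hval, htruth, hweak, g, hgC, hglt⟩
  classical
  set E2 : Finset (Edge n m) := Finset.univ.biUnion D with hE2def
  have hE2sub : E2 ⊆ E := by
    intro e he
    obtain ⟨i, -, hei⟩ := Finset.mem_biUnion.mp he
    exact Finset.filter_subset _ E ((hval i).1 hei)
  have hCedge : ∀ (i : Fin n) (j : Fin m), (i, j) ∈ E → (i, j) ∉ E2 → i ∈ C := by
    intro i j hiE hnE
    by_contra hiC
    exact hnE (Finset.subset_biUnion_of_mem D (Finset.mem_univ i)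
      (by rw [htruth i hiC]; exact Finset.mem_filter.mpr ⟨hiE, rfl⟩))
  set L : List (Fin m) := sortedTasks m q with hLdef
  have hnodupL : L.Nodup := by
    rw [hLdef]; unfold sortedTasks
    exact (List.perm_insertionSort _ _).symm.nodup (List.nodup_finRange m)
  have hsortedL : List.Pairwise (fun j k => q k ≤ q j) L := by
    haveI h1 : IsTotal (Fin m) (fun j k => q k ≤ q j) := ⟨fun a c => le_total (q c) (q a)⟩
    haveI h2 : IsTrans (Fin m) (fun j k => q k ≤ q j) := ⟨fun a c d hac hcd => le_trans hcd hac⟩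
    rw [hLdef]; unfold sortedTasks
    exact List.pairwise_insertionSort _ _
  have hstrict : ∀ (k k' : ℕ) (hk : k < L.length) (hk' : k' < L.length), k < k' →
      q (L.get ⟨k', hk'⟩) < q (L.get ⟨k, hk⟩) := by
    intro k k' hk hk' hlt
    have hle := List.pairwise_iff_get.mp hsortedL ⟨k, hk⟩ ⟨k', hk'⟩ hlt
    refine lt_of_le_of_ne hle (fun hEq => ?_)
    have h4 := hnodupL.get_inj_iff.mp (hdist hEq)
    have h5 := congrArg Fin.val h4
    simp only at h5
    omega
  have hdropsub : ∀ (k : ℕ), ∀ t ∈ L.drop (k+1), t ∈ L.drop k := by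
    intro k t ht
    exact List.drop_subset 1 (L.drop k) (by rw [List.drop_drop]; exact ht)
  have hMAPE : MAP b q E = runS b E L L.length := by rw [hLdef]; exact MAP_eq_runS b q E
  have hMAPD : MAP b q E2 = runS b E2 L L.length := by rw [hLdef]; exact MAP_eq_runS b q E2
  by_cases hev : ∃ (k : ℕ) (hk : k < L.length),
      pick b E (runS b E L k) (L.get ⟨k, hk⟩) ≠ pick b E2 (runS b E2 L k) (L.get ⟨k, hk⟩)
  case neg =>
    push_neg at hev
    have hrun : ∀ k, runS b E L k = runS b E2 L k := by
      intro k
      induction k with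
      | zero => rfl
      | succ k ih =>
        by_cases hk : k < L.length
        · rw [runS_succ hk, runS_succ hk]
          have heq := hev k hk
          unfold stepF
          rw [← heq, ← ih]
        · push_neg at hk
          rw [runS_stable (by omega : L.length ≤ k + 1),
            runS_stable (by omega : L.length ≤ k + 1)]
          rw [runS_stable hk, runS_stable hk] at ih
          exact ih
    rw [hMAPE, hMAPD, hrun] at hglt
    exact lt_irrefl _ hglt
  case pos =>
    have hIex : ∃ i : Fin n, ∃ (k : ℕ) (hk : k < L.length),
        pick b E (runS b E L k) (L.get ⟨k, hk⟩) ≠ pick b E2 (runS b E2 L k) (L.get ⟨k, hk⟩) ∧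
        (pick b E (runS b E L k) (L.get ⟨k, hk⟩) = some i ∨
         pick b E2 (runS b E2 L k) (L.get ⟨k, hk⟩) = some i) := by
      obtain ⟨k, hk, hne⟩ := hev
      rcases hpE : pick b E (runS b E L k) (L.get ⟨k, hk⟩) with _ | i
      · rcases hpD : pick b E2 (runS b E2 L k) (L.get ⟨k, hk⟩) with _ | i'
        · exact absurd (hpE.trans hpD.symm) hne
        · exact ⟨i', k, hk, hne, Or.inr hpD⟩
      · exact ⟨i, k, hk, hne, Or.inl hpE⟩
    set Iset : Finset (Fin n) := Finset.univ.filter (fun i => ∃ (k : ℕ) (hk : k < L.length),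
        pick b E (runS b E L k) (L.get ⟨k, hk⟩) ≠ pick b E2 (runS b E2 L k) (L.get ⟨k, hk⟩) ∧
        (pick b E (runS b E L k) (L.get ⟨k, hk⟩) = some i ∨
         pick b E2 (runS b E2 L k) (L.get ⟨k, hk⟩) = some i)) with hIdef
    have hInonempty : Iset.Nonempty := by
      obtain ⟨i, hi⟩ := hIex
      exact ⟨i, Finset.mem_filter.mpr ⟨Finset.mem_univ _, hi⟩⟩
    set p : Fin n := Iset.min' hInonempty with hpdef
    have hmin : ∀ i ∈ Iset, p ≤ i := fun i hi => Iset.min'_le i hi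
    have hpI := (Finset.mem_filter.mp (Iset.min'_mem hInonempty)).2
    set G1 : ℕ → Prop := fun k =>
      deg (runS b E2 L k) p = deg (runS b E L k) p ∧
      util q p (runS b E2 L k) = util q p (runS b E L k) with hG1def
    set G2 : ℕ → Prop := fun k => p ∈ C ∧ ∃ (d : ℕ) (B : ℝ), 0 < B ∧
      (∀ t ∈ L.drop k, q t < B) ∧
      deg (runS b E L k) p = deg (runS b E2 L k) p + d ∧
      util q p (runS b E2 L k) + d * B ≤ util q p (runS b E L k) ∧
      (util q p (runS b E2 L k) < util q p (runS b E L k) ∨ 0 < d) with hG2def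
    have step3 : ∀ (k : ℕ) (hk : k < L.length), (G1 k ∨ G2 k) →
        (G1 (k+1) ∨ G2 (k+1)) ∧ (G2 k → G2 (k+1)) ∧
        ((pick b E (runS b E L k) (L.get ⟨k, hk⟩) ≠ pick b E2 (runS b E2 L k) (L.get ⟨k, hk⟩) ∧
          (pick b E (runS b E L k) (L.get ⟨k, hk⟩) = some p ∨
           pick b E2 (runS b E2 L k) (L.get ⟨k, hk⟩) = some p)) → G2 (k+1)) := by
      intro k hk hcur
      set j : Fin m := L.get ⟨k, hk⟩ with hjdef
      have hw0 : (0:ℝ) < q j := hq j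
      have hjdrop : j ∈ L.drop k := by
        rw [List.drop_eq_getElem_cons hk]
        exact List.mem_cons_self
      have hboundnew : ∀ t ∈ L.drop (k+1), q t < q j := by
        intro t ht
        obtain ⟨a, ha, rfl⟩ := List.mem_iff_getElem.mp ht
        have halen : k + 1 + a < L.length := by
          have := ha; rw [List.length_drop] at this; omega
        rw [List.getElem_drop]
        have := hstrict k (k+1+a) hk halen (by omega)
        simpa [List.get_eq_getElem, hjdef] using this
      have htriv : ∀ (G : Finset (Edge n m)), pick b G (runS b G L k) j ≠ some p →
          deg (runS b G L (k+1)) p = deg (runS b G L k) p ∧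
          util q p (runS b G L (k+1)) = util q p (runS b G L k) := by
        intro G hne
        rcases hpG : pick b G (runS b G L k) j with _ | i
        · rw [runS_step_none hk hpG]
          exact ⟨rfl, rfl⟩
        · have hip : p ≠ i := fun h => hne (by rw [hpG, h])
          have hse := runS_step_some q hnodupL hk hpG p
          simp only [if_neg hip] at hse
          exact ⟨by simpa using hse.1, by simpa using hse.2⟩
      by_cases hgain : pick b E2 (runS b E2 L k) j = some p ∧
          pick b E (runS b E L k) j ≠ some p
      · obtain ⟨hpD, hpEne⟩ := hgain
        obtain ⟨hpjE2, hdegD⟩ := pick_spec hpD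
        have hpjE : (p, j) ∈ E := hE2sub hpjE2
        have hdegE : b p ≤ deg (runS b E L k) p := by
          by_contra hcon
          push_neg at hcon
          obtain ⟨i2, hi2, hle⟩ := pick_ex hpjE hcon
          have hne2 : i2 ≠ p := fun h => hpEne (h ▸ hi2)
          have hIi2 : i2 ∈ Iset := Finset.mem_filter.mpr ⟨Finset.mem_univ _,
            k, hk, by rw [hi2, hpD]; simp [hne2], Or.inl hi2⟩
          exact hne2 (le_antisymm hle (hmin i2 hIi2))
        have hdd : deg (runS b E2 L k) p < deg (runS b E L k) p := lt_of_lt_of_le hdegD hdegE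
        have heffD := runS_step_some q hnodupL hk hpD p
        rw [if_pos rfl, if_pos rfl] at heffD
        have heffE := htriv E hpEne
        have hG2new : G2 (k+1) := by
          simp only [hG2def]
          rcases hcur with hg1 | hg2
          · simp only [hG1def] at hg1
            rw [hg1.1] at hdd
            exact absurd hdd (lt_irrefl _)
          · simp only [hG2def] at hg2
            obtain ⟨pC, d, B, hB0, hbd, heqd, hineq, hstr⟩ := hg2
            have hd1 : 0 < d := by omega
            obtain ⟨d', rfl⟩ : ∃ d', d = d' + 1 := ⟨d - 1, by omega⟩
            have hwB : q j < B := hbd j hjdrop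
            refine ⟨pC, d', B, hB0, fun t ht => hbd t (hdropsub k t ht), ?_, ?_, ?_⟩
            · rw [heffE.1, heffD.1]; omega
            · rw [heffE.2, heffD.2]
              push_cast at hineq ⊢
              nlinarith
            · left
              rw [heffE.2, heffD.2]
              push_cast at hineq
              nlinarith
        exact ⟨Or.inr hG2new, fun _ => hG2new, fun _ => hG2new⟩
      · by_cases hloss : pick b E (runS b E L k) j = some p ∧
            pick b E2 (runS b E2 L k) j ≠ some p
        · obtain ⟨hpE, hpDne⟩ := hloss
          obtain ⟨hpjE, hdegEp⟩ := pick_spec hpE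
          have heffE := runS_step_some q hnodupL hk hpE p
          rw [if_pos rfl, if_pos rfl] at heffE
          have heffD := htriv E2 hpDne
          have hG2new : G2 (k+1) := by
            simp only [hG2def]
            rcases hcur with hg1 | hg2
            · simp only [hG1def] at hg1
              have hnotE2 : (p, j) ∉ E2 := by
                intro hmem
                have hdegD2 : deg (runS b E2 L k) p < b p := by rw [hg1.1]; exact hdegEp
                obtain ⟨i2, hi2, hle⟩ := pick_ex hmem hdegD2
                have hne2 : i2 ≠ p := fun h => hpDne (h ▸ hi2)
                have hIi2 : i2 ∈ Iset := Finset.mem_filter.mpr ⟨Finset.mem_univ _,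
                  k, hk, by rw [hpE, hi2]; simp [Ne.symm hne2], Or.inr hi2⟩
                exact hne2 (le_antisymm hle (hmin i2 hIi2))
              have pC : p ∈ C := hCedge p j hpjE hnotE2
              refine ⟨pC, 1, q j, hw0, hboundnew, ?_, ?_, Or.inr one_pos⟩
              · rw [heffE.1, heffD.1, hg1.1]
              · rw [heffE.2, heffD.2, hg1.2]
                push_cast
                linarith
            · simp only [hG2def] at hg2
              obtain ⟨pC, d, B, hB0, hbd, heqd, hineq, hstr⟩ := hg2
              have hwB : q j < B := hbd j hjdrop
              refine ⟨pC, d + 1, q j, hw0, hboundnew, ?_, ?_, Or.inr (by omega)⟩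
              · rw [heffE.1, heffD.1]; omega
              · rw [heffE.2, heffD.2]
                push_cast at hineq ⊢
                nlinarith [Nat.cast_nonneg (α := ℝ) d]
          exact ⟨Or.inr hG2new, fun _ => hG2new, fun _ => hG2new⟩
        · by_cases hboth : pick b E (runS b E L k) j = some p
          · have hpD : pick b E2 (runS b E2 L k) j = some p := by
              by_contra hcon
              exact hloss ⟨hboth, hcon⟩
            have heffE := runS_step_some q hnodupL hk hboth p
            rw [if_pos rfl, if_pos rfl] at heffE
            have heffD := runS_step_some q hnodupL hk hpD p
            rw [if_pos rfl, if_pos rfl] at heffD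
            have hpres : G1 (k+1) ∨ G2 (k+1) := by
              rcases hcur with hg1 | hg2
              · left
                simp only [hG1def] at hg1 ⊢
                exact ⟨by rw [heffE.1, heffD.1, hg1.1], by rw [heffE.2, heffD.2, hg1.2]⟩
              · right
                simp only [hG2def] at hg2 ⊢
                obtain ⟨pC, d, B, hB0, hbd, heqd, hineq, hstr⟩ := hg2
                refine ⟨pC, d, B, hB0, fun t ht => hbd t (hdropsub k t ht), ?_, ?_, ?_⟩
                · rw [heffE.1, heffD.1]; omega
                · rw [heffE.2, heffD.2]; linarith
                · rcases hstr with h | h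
                  · left; rw [heffE.2, heffD.2]; linarith
                  · right; exact h
            have habs : G2 k → G2 (k+1) := by
              intro hg2
              simp only [hG2def] at hg2 ⊢
              obtain ⟨pC, d, B, hB0, hbd, heqd, hineq, hstr⟩ := hg2
              refine ⟨pC, d, B, hB0, fun t ht => hbd t (hdropsub k t ht), ?_, ?_, ?_⟩
              · rw [heffE.1, heffD.1]; omega
              · rw [heffE.2, heffD.2]; linarith
              · rcases hstr with h | h
                · left; rw [heffE.2, heffD.2]; linarith
                · right; exact h
            refine ⟨hpres, habs, ?_⟩
            rintro ⟨hne, -⟩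
            rw [hboth, hpD] at hne
            exact absurd rfl hne
          · have hpDne : pick b E2 (runS b E2 L k) j ≠ some p := by
              intro hcon
              exact hgain ⟨hcon, hboth⟩
            have heffE := htriv E hboth
            have heffD := htriv E2 hpDne
            have hpres : G1 (k+1) ∨ G2 (k+1) := by
              rcases hcur with hg1 | hg2
              · left
                simp only [hG1def] at hg1 ⊢
                exact ⟨by rw [heffE.1, heffD.1, hg1.1], by rw [heffE.2, heffD.2, hg1.2]⟩
              · right
                simp only [hG2def] at hg2 ⊢
                obtain ⟨pC, d, B, hB0, hbd, heqd, hineq, hstr⟩ := hg2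
                refine ⟨pC, d, B, hB0, fun t ht => hbd t (hdropsub k t ht), ?_, ?_, ?_⟩
                · rw [heffE.1, heffD.1]; omega
                · rw [heffE.2, heffD.2]; linarith
                · rcases hstr with h | h
                  · left; rw [heffE.2, heffD.2]; linarith
                  · right; exact h
            have habs : G2 k → G2 (k+1) := by
              intro hg2
              simp only [hG2def] at hg2 ⊢
              obtain ⟨pC, d, B, hB0, hbd, heqd, hineq, hstr⟩ := hg2
              refine ⟨pC, d, B, hB0, fun t ht => hbd t (hdropsub k t ht), ?_, ?_, ?_⟩
              · rw [heffE.1, heffD.1]; omega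
              · rw [heffE.2, heffD.2]; linarith
              · rcases hstr with h | h
                · left; rw [heffE.2, heffD.2]; linarith
                · right; exact h
            refine ⟨hpres, habs, ?_⟩
            rintro ⟨-, hor⟩
            rcases hor with h | h
            · exact absurd h hboth
            · exact absurd h hpDne
    have key : ∀ k : ℕ, (G1 k ∨ G2 k) ∧
        ((∃ (k0 : ℕ) (hk0 : k0 < L.length), k0 < k ∧
          (pick b E (runS b E L k0) (L.get ⟨k0, hk0⟩) ≠
            pick b E2 (runS b E2 L k0) (L.get ⟨k0, hk0⟩) ∧
           (pick b E (runS b E L k0) (L.get ⟨k0, hk0⟩) = some p ∨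
            pick b E2 (runS b E2 L k0) (L.get ⟨k0, hk0⟩) = some p))) → G2 k) := by
      intro k
      induction k with
      | zero =>
        constructor
        · left
          simp only [hG1def]
          exact ⟨rfl, rfl⟩
        · rintro ⟨k0, hk0, hlt, -⟩
          omega
      | succ k ih =>
        by_cases hk : k < L.length
        · have h3 := step3 k hk ih.1
          refine ⟨h3.1, ?_⟩
          rintro ⟨k0, hk0, hlt, hEV⟩
          rcases Nat.lt_succ_iff_lt_or_eq.mp hlt with hlt' | rfl
          · exact h3.2.1 (ih.2 ⟨k0, hk0, hlt', hEV⟩)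
          · exact h3.2.2 hEV
        · push_neg at hk
          have hsE : runS b E L (k+1) = runS b E L k := by
            rw [runS_stable (by omega : L.length ≤ k + 1), runS_stable hk]
          have hsD : runS b E2 L (k+1) = runS b E2 L k := by
            rw [runS_stable (by omega : L.length ≤ k + 1), runS_stable hk]
          have htr : ∀ kk, (kk = k) → (G1 kk → G1 (k+1)) ∧ (G2 kk → G2 (k+1)) := by
            rintro kk rfl
            constructor
            · intro hg1
              simp only [hG1def] at hg1 ⊢
              rw [hsE, hsD]
              exact hg1
            · intro hg2
              simp only [hG2def] at hg2 ⊢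
              obtain ⟨pC, d, B, hB0, hbd, heqd, hineq, hstr⟩ := hg2
              rw [hsE, hsD]
              exact ⟨pC, d, B, hB0, fun t ht => hbd t (hdropsub kk t ht), heqd, hineq, hstr⟩
          constructor
          · rcases ih.1 with hg1 | hg2
            · exact Or.inl ((htr k rfl).1 hg1)
            · exact Or.inr ((htr k rfl).2 hg2)
          · rintro ⟨k0, hk0, hlt, hEV⟩
            have hk0k : k0 < k := by omega
            exact (htr k rfl).2 (ih.2 ⟨k0, hk0, hk0k, hEV⟩)
    obtain ⟨k0, hk0, hEVp⟩ := hpI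
    have hG2fin : G2 L.length := (key L.length).2 ⟨k0, hk0, hk0, hEVp⟩
    simp only [hG2def] at hG2fin
    obtain ⟨pC, d, B, hB0, hbd, heqd, hineq, hstr⟩ := hG2fin
    have hlt2 : util q p (runS b E2 L L.length) < util q p (runS b E L L.length) := by
      rcases hstr with h | h
      · exact h
      · have hd1 : (1:ℝ) ≤ (d:ℝ) := by exact_mod_cast h
        nlinarith
    rw [← hMAPE, ← hMAPD] at hlt2
    exact absurd (hweak p pC) (not_le.mpr hlt2)
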